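/- Let G be a topological fan quasigroup whose topology is T1. Then the fan N₀ = N₀(G) is a closed normal subgroup of G; that is, N₀ is a closed subgroup of G satisfying xN₀ = N₀x, (xy)N₀ = x(yN₀), (xN₀)y = x(N₀y) and N₀(xy) = (N₀x)y for all x, y ∈ G. -/
import Mathlib


/-- The left nucleus of a binary operation. -/
def leftNucleus {G : Type*} (mul : G → G → G) : Set G :=
  {a | ∀ b c, mul (mul a b) c = mul a (mul b c)}

/-- The middle nucleus of a binary operation. -/
def midNucleus {G : Type*} (mul : G → G → G) : Set G :=
  {a | ∀ b c, mul (mul b a) c = mul b (mul a c)}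

/-- The right nucleus of a binary operation. -/
def rightNucleus {G : Type*} (mul : G → G → G) : Set G :=
  {a | ∀ b c, mul (mul b c) a = mul b (mul c a)}

/-- The nucleus `N(G)` of a binary operation. -/
def nucleusSet {G : Type*} (mul : G → G → G) : Set G :=
  leftNucleus mul ∩ midNucleus mul ∩ rightNucleus mul

/-- The commutant `Com(G)` of a binary operation. -/
def comSet {G : Type*} (mul : G → G → G) : Set G :=
  {a | ∀ b, mul a b = mul b a}

/-- The center `C(G) = Com(G) ∩ N(G)` of a binary operation. -/
def centerSet {G : Type*} (mul : G → G → G) : Set G :=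
  comSet mul ∩ nucleusSet mul

/-- A fan quasigroup: a unital quasigroup `G` (with left division `ldiv` and right
division `rdiv`, so `a\b = ldiv a b` and `a/b = rdiv a b`) together with maps
`t, p : G×G×G → N(G)` such that `(ab)c = t(a,b,c)·(a(bc))` and
`(ab)c = (a(bc))·p(a,b,c)`. -/
structure FanQuasigroup (G : Type*) where
  mul : G → G → G
  ldiv : G → G → G
  rdiv : G → G → G
  e : G
  mul_ldiv : ∀ a b, mul a (ldiv a b) = b
  ldiv_mul : ∀ a b, ldiv a (mul a b) = b
  rdiv_mul : ∀ a b, mul (rdiv a b) b = a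
  mul_rdiv : ∀ a b, rdiv (mul a b) b = a
  one_mul : ∀ a, mul e a = a
  mul_one : ∀ a, mul a e = a
  t : G → G → G → G
  p : G → G → G → G
  t_mem : ∀ a b c, t a b c ∈ nucleusSet mul
  p_mem : ∀ a b c, p a b c ∈ nucleusSet mul
  t_spec : ∀ a b c, mul (mul a b) c = mul (t a b c) (mul a (mul b c))
  p_spec : ∀ a b c, mul (mul a b) c = mul (mul a (mul b c)) (p a b c)

/-- The inverse of an element in the group `N(G)`, computed as `x\e`. -/
def FanQuasigroup.inv {G : Type*} (Q : FanQuasigroup G) (x : G) : G := Q.ldiv x Q.e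

/-- A subset `S` of a fan quasigroup is a subgroup if it contains the neutral
element, is closed under multiplication and inversion, and multiplication
restricted to it is associative (so that it is a group). -/
def FanQuasigroup.IsSubgrp {G : Type*} (Q : FanQuasigroup G) (S : Set G) : Prop :=
  Q.e ∈ S ∧ (∀ x ∈ S, ∀ y ∈ S, Q.mul x y ∈ S) ∧ (∀ x ∈ S, Q.ldiv x Q.e ∈ S) ∧
    (∀ x ∈ S, ∀ y ∈ S, ∀ z ∈ S, Q.mul (Q.mul x y) z = Q.mul x (Q.mul y z))

/-- The fan `N₀(G)` of a topological fan quasigroup: the minimal closed subgroup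
containing all the values `t(a,b,c)` and `p(a,b,c)`. -/
def FanQuasigroup.fan {G : Type*} [TopologicalSpace G] (Q : FanQuasigroup G) : Set G :=
  ⋂₀ {S : Set G | IsClosed S ∧ Q.IsSubgrp S ∧ ∀ a b c : G, Q.t a b c ∈ S ∧ Q.p a b c ∈ S}

/-- A subset `H` of a fan quasigroup is normal if `xH = Hx`, `(xy)H = x(yH)`,
`(xH)y = x(Hy)` and `H(xy) = (Hx)y` for all `x, y`. -/
def FanQuasigroup.IsNormalSub {G : Type*} (Q : FanQuasigroup G) (H : Set G) : Prop :=
  ∀ x y : G,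
    (fun h => Q.mul x h) '' H = (fun h => Q.mul h x) '' H ∧
    (fun h => Q.mul (Q.mul x y) h) '' H = (fun h => Q.mul x (Q.mul y h)) '' H ∧
    (fun h => Q.mul (Q.mul x h) y) '' H = (fun h => Q.mul x (Q.mul h y)) '' H ∧
    (fun h => Q.mul h (Q.mul x y)) '' H = (fun h => Q.mul (Q.mul h x) y) '' H

namespace FanAux

section Alg

variable {G : Type*} (Q : FanQuasigroup G)

local infixl:70 " ** " => Q.mul

theorem mul_left_cancel {a b c : G} (h : a ** b = a ** c) : b = c := by
  have h2 := congrArg (Q.ldiv a) h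
  simpa [Q.ldiv_mul] using h2

theorem mul_right_cancel {a b c : G} (h : a ** c = b ** c) : a = b := by
  have h2 := congrArg (fun z => Q.rdiv z c) h
  simpa [Q.mul_rdiv] using h2

theorem ldiv_self (a : G) : Q.ldiv a a = Q.e := by
  have : a ** Q.ldiv a a = a ** Q.e := by rw [Q.mul_ldiv, Q.mul_one]
  exact mul_left_cancel Q this

theorem rdiv_self (a : G) : Q.rdiv a a = Q.e := by
  have : Q.rdiv a a ** a = Q.e ** a := by rw [Q.rdiv_mul, Q.one_mul]
  exact mul_right_cancel Q this

theorem ldiv_eq_e {a b : G} (h : a = b) : Q.ldiv a b = Q.e := by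
  subst h; exact ldiv_self Q a

theorem eq_of_ldiv_eq_e {a b : G} (h : Q.ldiv a b = Q.e) : a = b := by
  have h2 := Q.mul_ldiv a b
  rw [h, Q.mul_one] at h2
  exact h2

theorem nL {n : G} (hn : n ∈ nucleusSet Q.mul) (b c : G) :
    (n ** b) ** c = n ** (b ** c) := hn.1.1 b c

theorem nM {n : G} (hn : n ∈ nucleusSet Q.mul) (b c : G) :
    (b ** n) ** c = b ** (n ** c) := hn.1.2 b c

theorem nR {n : G} (hn : n ∈ nucleusSet Q.mul) (b c : G) :
    (b ** c) ** n = b ** (c ** n) := hn.2 b c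

theorem mul_inv (n : G) : n ** Q.ldiv n Q.e = Q.e := Q.mul_ldiv n Q.e

theorem inv_mul {n : G} (hn : n ∈ nucleusSet Q.mul) : Q.ldiv n Q.e ** n = Q.e := by
  apply mul_left_cancel Q (a := n)
  rw [← nL Q hn, mul_inv, Q.one_mul, Q.mul_one]

theorem inv_mul_cancel_left {n : G} (hn : n ∈ nucleusSet Q.mul) (y : G) :
    Q.ldiv n Q.e ** (n ** y) = y := by
  rw [← nM Q hn, inv_mul Q hn, Q.one_mul]

theorem mul_inv_cancel_right {n : G} (hn : n ∈ nucleusSet Q.mul) (y : G) :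
    (y ** n) ** Q.ldiv n Q.e = y := by
  rw [nM Q hn, mul_inv, Q.mul_one]

theorem inv_mul_cancel_right {n : G} (hn : n ∈ nucleusSet Q.mul) (y : G) :
    (y ** Q.ldiv n Q.e) ** n = y := by
  rw [nR Q hn, inv_mul Q hn, Q.mul_one]

theorem mul_inv_cancel_left {n : G} (hn : n ∈ nucleusSet Q.mul) (y : G) :
    n ** (Q.ldiv n Q.e ** y) = y := by
  rw [← nL Q hn, mul_inv, Q.one_mul]

theorem e_mem_nucleus : Q.e ∈ nucleusSet Q.mul := by
  refine ⟨⟨fun b c => ?_, fun b c => ?_⟩, fun b c => ?_⟩ <;>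
    simp [Q.one_mul, Q.mul_one]

theorem inv_mem_nucleus {n : G} (hn : n ∈ nucleusSet Q.mul) :
    Q.ldiv n Q.e ∈ nucleusSet Q.mul := by
  refine ⟨⟨fun b c => ?_, fun b c => ?_⟩, fun b c => ?_⟩
  · obtain ⟨b', rfl⟩ : ∃ b', n ** b' = b := ⟨Q.ldiv n b, Q.mul_ldiv n b⟩
    rw [inv_mul_cancel_left Q hn, nL Q hn, inv_mul_cancel_left Q hn]
  · obtain ⟨b', rfl⟩ : ∃ b', b' ** n = b := ⟨Q.rdiv b n, Q.rdiv_mul b n⟩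
    obtain ⟨c', rfl⟩ : ∃ c', n ** c' = c := ⟨Q.ldiv n c, Q.mul_ldiv n c⟩
    rw [mul_inv_cancel_right Q hn, inv_mul_cancel_left Q hn]
    exact (nM Q hn b' c').symm
  · obtain ⟨c', rfl⟩ : ∃ c', c' ** n = c := ⟨Q.rdiv c n, Q.rdiv_mul c n⟩
    rw [mul_inv_cancel_right Q hn, ← nR Q hn]
    exact mul_inv_cancel_right Q hn _

theorem mul_mem_nucleus {a b : G} (ha : a ∈ nucleusSet Q.mul)
    (hb : b ∈ nucleusSet Q.mul) : a ** b ∈ nucleusSet Q.mul := by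
  refine ⟨⟨fun x y => ?_, fun x y => ?_⟩, fun x y => ?_⟩
  · calc ((a ** b) ** x) ** y = (a ** (b ** x)) ** y := by rw [nL Q ha]
      _ = a ** ((b ** x) ** y) := nL Q ha _ _
      _ = a ** (b ** (x ** y)) := by rw [nL Q hb]
      _ = (a ** b) ** (x ** y) := (nL Q ha _ _).symm
  · calc (x ** (a ** b)) ** y = ((x ** a) ** b) ** y := by rw [nM Q ha]
      _ = (x ** a) ** (b ** y) := nM Q hb _ _
      _ = x ** (a ** (b ** y)) := nM Q ha _ _
      _ = x ** ((a ** b) ** y) := by rw [nM Q hb]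
  · calc (x ** y) ** (a ** b) = ((x ** y) ** a) ** b := (nR Q hb _ _).symm
      _ = (x ** (y ** a)) ** b := by rw [nR Q ha]
      _ = x ** ((y ** a) ** b) := nR Q hb _ _
      _ = x ** (y ** (a ** b)) := by rw [nR Q hb]

theorem nucleus_isSubgrp : Q.IsSubgrp (nucleusSet Q.mul) :=
  ⟨e_mem_nucleus Q, fun x hx y hy => mul_mem_nucleus Q hx hy,
   fun x hx => inv_mem_nucleus Q hx, fun x hx y _ z _ => nL Q hx y z⟩

end Alg

end FanAux
namespace FanAux

theorem cont_op {G X : Type*} [TopologicalSpace X] [TopologicalSpace G]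
    {op : G → G → G} (hop : Continuous fun q : G × G => op q.1 q.2)
    {f g : X → G} (hf : Continuous f) (hg : Continuous g) :
    Continuous fun x => op (f x) (g x) := hop.comp (hf.prodMk hg)

section Top

variable {G : Type*} (Q : FanQuasigroup G)

local infixl:70 " ** " => Q.mul

theorem isClosed_eqSet {X : Type*} [TopologicalSpace G] [T1Space G] [TopologicalSpace X]
    (hcl : Continuous fun q : G × G => Q.ldiv q.1 q.2)
    {f g : X → G} (hf : Continuous f) (hg : Continuous g) :
    IsClosed {x | f x = g x} := by
  have h : {x | f x = g x} = (fun x => Q.ldiv (f x) (g x)) ⁻¹' {Q.e} := by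
    ext x
    simp only [Set.mem_setOf_eq, Set.mem_preimage, Set.mem_singleton_iff]
    exact ⟨fun h => ldiv_eq_e Q h, fun h => eq_of_ldiv_eq_e Q h⟩
  rw [h]
  exact isClosed_singleton.preimage (cont_op hcl hf hg)

theorem isClosed_nucleus [TopologicalSpace G] [T1Space G]
    (hcm : Continuous fun q : G × G => Q.mul q.1 q.2)
    (hcl : Continuous fun q : G × G => Q.ldiv q.1 q.2) :
    IsClosed (nucleusSet Q.mul) := by
  have hL : IsClosed (leftNucleus Q.mul) := by
    have h : leftNucleus Q.mul =
        ⋂ (b : G), ⋂ (c : G), {a | (a ** b) ** c = a ** (b ** c)} := by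
      ext a; simp [leftNucleus, Set.mem_iInter]
    rw [h]
    exact isClosed_iInter fun b => isClosed_iInter fun c =>
      isClosed_eqSet Q hcl
        (cont_op hcm (cont_op hcm continuous_id continuous_const) continuous_const)
        (cont_op hcm continuous_id continuous_const)
  have hM : IsClosed (midNucleus Q.mul) := by
    have h : midNucleus Q.mul =
        ⋂ (b : G), ⋂ (c : G), {a | (b ** a) ** c = b ** (a ** c)} := by
      ext a; simp [midNucleus, Set.mem_iInter]
    rw [h]
    exact isClosed_iInter fun b => isClosed_iInter fun c =>
      isClosed_eqSet Q hcl
        (cont_op hcm (cont_op hcm continuous_const continuous_id) continuous_const)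
        (cont_op hcm continuous_const (cont_op hcm continuous_id continuous_const))
  have hR : IsClosed (rightNucleus Q.mul) := by
    have h : rightNucleus Q.mul =
        ⋂ (b : G), ⋂ (c : G), {a | (b ** c) ** a = b ** (c ** a)} := by
      ext a; simp [rightNucleus, Set.mem_iInter]
    rw [h]
    exact isClosed_iInter fun b => isClosed_iInter fun c =>
      isClosed_eqSet Q hcl
        (cont_op hcm continuous_const continuous_id)
        (cont_op hcm continuous_const (cont_op hcm continuous_const continuous_id))
  exact (hL.inter hM).inter hR

variable [TopologicalSpace G]

theorem fan_isClosed : IsClosed Q.fan :=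
  isClosed_sInter fun _ hS => hS.1

theorem t_mem_fan (a b c : G) : Q.t a b c ∈ Q.fan :=
  Set.mem_sInter.mpr fun _ hS => (hS.2.2 a b c).1

theorem p_mem_fan (a b c : G) : Q.p a b c ∈ Q.fan :=
  Set.mem_sInter.mpr fun _ hS => (hS.2.2 a b c).2

theorem e_mem_fan : Q.e ∈ Q.fan :=
  Set.mem_sInter.mpr fun _ hS => hS.2.1.1

theorem mul_mem_fan {x y : G} (hx : x ∈ Q.fan) (hy : y ∈ Q.fan) : x ** y ∈ Q.fan :=
  Set.mem_sInter.mpr fun S hS =>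
    hS.2.1.2.1 x (Set.mem_sInter.mp hx S hS) y (Set.mem_sInter.mp hy S hS)

theorem inv_mem_fan {x : G} (hx : x ∈ Q.fan) : Q.ldiv x Q.e ∈ Q.fan :=
  Set.mem_sInter.mpr fun S hS => hS.2.1.2.2.1 x (Set.mem_sInter.mp hx S hS)

theorem fan_subset_nucleus [T1Space G]
    (hcm : Continuous fun q : G × G => Q.mul q.1 q.2)
    (hcl : Continuous fun q : G × G => Q.ldiv q.1 q.2) :
    Q.fan ⊆ nucleusSet Q.mul :=
  Set.sInter_subset_of_mem
    ⟨isClosed_nucleus Q hcm hcl, nucleus_isSubgrp Q,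
     fun a b c => ⟨Q.t_mem a b c, Q.p_mem a b c⟩⟩

theorem fan_isSubgrp (hsub : Q.fan ⊆ nucleusSet Q.mul) : Q.IsSubgrp Q.fan :=
  ⟨e_mem_fan Q, fun x hx y hy => mul_mem_fan Q hx hy,
   fun x hx => inv_mem_fan Q hx, fun x hx y _ z _ => nL Q (hsub hx) y z⟩

end Top

end FanAux
namespace FanAux

section Conj

variable {G : Type*} (Q : FanQuasigroup G) [TopologicalSpace G]

local infixl:70 " ** " => Q.mul

/-- Key identity 1: for every `x`, `x · t(a,b,c) = T · x` for some `T` in the fan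
(and in the nucleus). -/
theorem t_conj_right (x a b c : G) :
    ∃ T, T ∈ Q.fan ∧ T ∈ nucleusSet Q.mul ∧ x ** Q.t a b c = T ** x := by
  have hτ := Q.t_mem a b c
  have ht1 := Q.t_mem x (a ** b) c
  have ht2 := Q.t_mem x a b
  have ht3 := Q.t_mem (x ** a) b c
  have ht4 := Q.t_mem x a (b ** c)
  have hA : Q.t x a b ** Q.t x (a ** b) c ∈ nucleusSet Q.mul := mul_mem_nucleus Q ht2 ht1
  have hB : Q.t (x ** a) b c ** Q.t x a (b ** c) ∈ nucleusSet Q.mul := mul_mem_nucleus Q ht3 ht4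
  have hAi := inv_mem_nucleus Q hA
  have hT : Q.ldiv (Q.t x a b ** Q.t x (a ** b) c) Q.e ** (Q.t (x ** a) b c ** Q.t x a (b ** c))
      ∈ nucleusSet Q.mul := mul_mem_nucleus Q hAi hB
  refine ⟨_, mul_mem_fan Q (inv_mem_fan Q (mul_mem_fan Q (t_mem_fan Q x a b)
      (t_mem_fan Q x (a ** b) c))) (mul_mem_fan Q (t_mem_fan Q (x ** a) b c)
      (t_mem_fan Q x a (b ** c))), hT, ?_⟩
  -- abbreviations only in comments: τ = t a b c, m = a(bc)
  have h1 : (x ** (a ** b)) ** c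
      = Q.t x (a ** b) c ** ((x ** Q.t a b c) ** (a ** (b ** c))) := by
    rw [Q.t_spec x (a ** b) c, Q.t_spec a b c, nM Q hτ]
  have hmain : (Q.t x a b ** Q.t x (a ** b) c) ** ((x ** Q.t a b c) ** (a ** (b ** c)))
      = (Q.t (x ** a) b c ** Q.t x a (b ** c)) ** (x ** (a ** (b ** c))) := by
    calc (Q.t x a b ** Q.t x (a ** b) c) ** ((x ** Q.t a b c) ** (a ** (b ** c)))
        = Q.t x a b ** (Q.t x (a ** b) c ** ((x ** Q.t a b c) ** (a ** (b ** c)))) :=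
          nM Q ht1 _ _
      _ = Q.t x a b ** ((x ** (a ** b)) ** c) := by rw [h1]
      _ = (Q.t x a b ** (x ** (a ** b))) ** c := (nL Q ht2 _ _).symm
      _ = ((x ** a) ** b) ** c := by rw [← Q.t_spec x a b]
      _ = Q.t (x ** a) b c ** ((x ** a) ** (b ** c)) := Q.t_spec (x ** a) b c
      _ = Q.t (x ** a) b c ** (Q.t x a (b ** c) ** (x ** (a ** (b ** c)))) := by
          rw [Q.t_spec x a (b ** c)]
      _ = (Q.t (x ** a) b c ** Q.t x a (b ** c)) ** (x ** (a ** (b ** c))) :=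
          (nM Q ht4 _ _).symm
  have hfin : (x ** Q.t a b c) ** (a ** (b ** c))
      = ((Q.ldiv (Q.t x a b ** Q.t x (a ** b) c) Q.e
          ** (Q.t (x ** a) b c ** Q.t x a (b ** c))) ** x) ** (a ** (b ** c)) := by
    calc (x ** Q.t a b c) ** (a ** (b ** c))
        = Q.ldiv (Q.t x a b ** Q.t x (a ** b) c) Q.e
            ** ((Q.t x a b ** Q.t x (a ** b) c) ** ((x ** Q.t a b c) ** (a ** (b ** c)))) :=
          (inv_mul_cancel_left Q hA _).symm
      _ = Q.ldiv (Q.t x a b ** Q.t x (a ** b) c) Q.e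
            ** ((Q.t (x ** a) b c ** Q.t x a (b ** c)) ** (x ** (a ** (b ** c)))) := by
          rw [hmain]
      _ = (Q.ldiv (Q.t x a b ** Q.t x (a ** b) c) Q.e
            ** (Q.t (x ** a) b c ** Q.t x a (b ** c))) ** (x ** (a ** (b ** c))) :=
          (nM Q hB _ _).symm
      _ = ((Q.ldiv (Q.t x a b ** Q.t x (a ** b) c) Q.e
            ** (Q.t (x ** a) b c ** Q.t x a (b ** c))) ** x) ** (a ** (b ** c)) :=
          (nL Q hT _ _).symm
  exact mul_right_cancel Q hfin

/-- Key identity 2: for every `g`, `t(a,b,c) · g = g · P` for some `P` in the fan. -/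
theorem t_conj_left (a b c g : G) :
    ∃ P, P ∈ Q.fan ∧ P ∈ nucleusSet Q.mul ∧ Q.t a b c ** g = g ** P := by
  have hτ := Q.t_mem a b c
  obtain ⟨y, rfl⟩ : ∃ y, (a ** (b ** c)) ** y = g :=
    ⟨Q.ldiv (a ** (b ** c)) g, Q.mul_ldiv _ g⟩
  have hp1 := Q.p_mem (a ** b) c y
  have hp2 := Q.p_mem a b (c ** y)
  have hp3 := Q.p_mem b c y
  have hp4 := Q.p_mem a (b ** c) y
  have hD : Q.p b c y ** Q.p a (b ** c) y ∈ nucleusSet Q.mul := mul_mem_nucleus Q hp3 hp4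
  have hDi := inv_mem_nucleus Q hD
  have hC : Q.p a b (c ** y) ** Q.p (a ** b) c y ∈ nucleusSet Q.mul := mul_mem_nucleus Q hp2 hp1
  have hP : Q.ldiv (Q.p b c y ** Q.p a (b ** c) y) Q.e ** (Q.p a b (c ** y) ** Q.p (a ** b) c y)
      ∈ nucleusSet Q.mul := mul_mem_nucleus Q hDi hC
  refine ⟨_, mul_mem_fan Q (inv_mem_fan Q (mul_mem_fan Q (p_mem_fan Q b c y)
      (p_mem_fan Q a (b ** c) y))) (mul_mem_fan Q (p_mem_fan Q a b (c ** y))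
      (p_mem_fan Q (a ** b) c y)), hP, ?_⟩
  -- v = a ** (b ** (c ** y))
  have hmy : (a ** (b ** c)) ** y
      = (a ** (b ** (c ** y))) ** (Q.p b c y ** Q.p a (b ** c) y) := by
    calc (a ** (b ** c)) ** y
        = (a ** ((b ** c) ** y)) ** Q.p a (b ** c) y := Q.p_spec a (b ** c) y
      _ = (a ** ((b ** (c ** y)) ** Q.p b c y)) ** Q.p a (b ** c) y := by
          rw [← Q.p_spec b c y]
      _ = ((a ** (b ** (c ** y))) ** Q.p b c y) ** Q.p a (b ** c) y := by
          rw [← nR Q hp3]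
      _ = (a ** (b ** (c ** y))) ** (Q.p b c y ** Q.p a (b ** c) y) := nM Q hp3 _ _
  have hE : Q.t a b c ** ((a ** (b ** c)) ** y)
      = (a ** (b ** (c ** y))) ** (Q.p a b (c ** y) ** Q.p (a ** b) c y) := by
    calc Q.t a b c ** ((a ** (b ** c)) ** y)
        = (Q.t a b c ** (a ** (b ** c))) ** y := (nL Q hτ _ _).symm
      _ = ((a ** b) ** c) ** y := by rw [← Q.t_spec a b c]
      _ = ((a ** b) ** (c ** y)) ** Q.p (a ** b) c y := Q.p_spec (a ** b) c y
      _ = ((a ** (b ** (c ** y))) ** Q.p a b (c ** y)) ** Q.p (a ** b) c y := by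
          rw [← Q.p_spec a b (c ** y)]
      _ = (a ** (b ** (c ** y))) ** (Q.p a b (c ** y) ** Q.p (a ** b) c y) := nM Q hp2 _ _
  calc Q.t a b c ** ((a ** (b ** c)) ** y)
      = (a ** (b ** (c ** y))) ** (Q.p a b (c ** y) ** Q.p (a ** b) c y) := hE
    _ = (((a ** (b ** (c ** y))) ** (Q.p b c y ** Q.p a (b ** c) y))
          ** Q.ldiv (Q.p b c y ** Q.p a (b ** c) y) Q.e)
          ** (Q.p a b (c ** y) ** Q.p (a ** b) c y) := by
        rw [mul_inv_cancel_right Q hD]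
    _ = ((a ** (b ** c)) ** y ** Q.ldiv (Q.p b c y ** Q.p a (b ** c) y) Q.e)
          ** (Q.p a b (c ** y) ** Q.p (a ** b) c y) := by rw [← hmy]
    _ = ((a ** (b ** c)) ** y)
          ** (Q.ldiv (Q.p b c y ** Q.p a (b ** c) y) Q.e
              ** (Q.p a b (c ** y) ** Q.p (a ** b) c y)) := nM Q hDi _ _

/-- Key identity 3: for every `g`, `g · p(a,b,c) = T · g` for some `T` in the fan. -/
theorem p_conj_right (a b c g : G) :
    ∃ T, T ∈ Q.fan ∧ T ∈ nucleusSet Q.mul ∧ g ** Q.p a b c = T ** g := by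
  have hτ := Q.t_mem a b c
  have hπ := Q.p_mem a b c
  have htp : Q.t a b c ** (a ** (b ** c)) = (a ** (b ** c)) ** Q.p a b c := by
    rw [← Q.t_spec a b c, Q.p_spec a b c]
  obtain ⟨x, rfl⟩ : ∃ x, x ** (a ** (b ** c)) = g :=
    ⟨Q.rdiv g (a ** (b ** c)), Q.rdiv_mul g _⟩
  obtain ⟨T, hTf, hTN, hT⟩ := t_conj_right Q x a b c
  refine ⟨T, hTf, hTN, ?_⟩
  calc (x ** (a ** (b ** c))) ** Q.p a b c
      = x ** ((a ** (b ** c)) ** Q.p a b c) := nR Q hπ x _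
    _ = x ** (Q.t a b c ** (a ** (b ** c))) := by rw [← htp]
    _ = (x ** Q.t a b c) ** (a ** (b ** c)) := (nM Q hτ x _).symm
    _ = (T ** x) ** (a ** (b ** c)) := by rw [hT]
    _ = T ** (x ** (a ** (b ** c))) := nL Q hTN x _

/-- Key identity 4: for every `y`, `p(a,b,c) · y = y · P` for some `P` in the fan. -/
theorem p_conj_left (a b c y : G) :
    ∃ P, P ∈ Q.fan ∧ P ∈ nucleusSet Q.mul ∧ Q.p a b c ** y = y ** P := by
  have hτ := Q.t_mem a b c
  have hπ := Q.p_mem a b c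
  have htp : Q.t a b c ** (a ** (b ** c)) = (a ** (b ** c)) ** Q.p a b c := by
    rw [← Q.t_spec a b c, Q.p_spec a b c]
  obtain ⟨P, hPf, hPN, hP⟩ := t_conj_left Q a b c ((a ** (b ** c)) ** y)
  refine ⟨P, hPf, hPN, ?_⟩
  have key : (a ** (b ** c)) ** (Q.p a b c ** y) = (a ** (b ** c)) ** (y ** P) := by
    calc (a ** (b ** c)) ** (Q.p a b c ** y)
        = ((a ** (b ** c)) ** Q.p a b c) ** y := (nM Q hπ _ y).symm
      _ = (Q.t a b c ** (a ** (b ** c))) ** y := by rw [← htp]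
      _ = Q.t a b c ** ((a ** (b ** c)) ** y) := nL Q hτ _ y
      _ = ((a ** (b ** c)) ** y) ** P := hP
      _ = (a ** (b ** c)) ** (y ** P) := nR Q hPN _ y
  exact mul_left_cancel Q key

end Conj

end FanAux
namespace FanAux

section Main

variable {G : Type*} (Q : FanQuasigroup G) [TopologicalSpace G]

local infixl:70 " ** " => Q.mul

/-- The conjugation stability of the fan: for every `x` and every `n` in the fan,
both `(x n)/x` and `x\(n x)` belong to the fan. -/
theorem conj_mem [T1Space G]
    (hcm : Continuous fun q : G × G => Q.mul q.1 q.2)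
    (hcl : Continuous fun q : G × G => Q.ldiv q.1 q.2)
    (hcr : Continuous fun q : G × G => Q.rdiv q.1 q.2)
    (x : G) : ∀ n ∈ Q.fan, Q.rdiv (x ** n) x ∈ Q.fan ∧ Q.ldiv x (n ** x) ∈ Q.fan := by
  have hsub : Q.fan ⊆ nucleusSet Q.mul := fan_subset_nucleus Q hcm hcl
  have hSmem : Q.fan ∩ ((fun n => Q.rdiv (x ** n) x) ⁻¹' Q.fan ∩
      (fun n => Q.ldiv x (n ** x)) ⁻¹' Q.fan) ∈
      {S : Set G | IsClosed S ∧ Q.IsSubgrp S ∧ ∀ a b c : G, Q.t a b c ∈ S ∧ Q.p a b c ∈ S} := by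
    refine ⟨?_, ⟨⟨e_mem_fan Q, ?_, ?_⟩, fun n hn m hm => ?_, fun n hn => ?_,
      fun u hu v _ w _ => nL Q (hsub hu.1) v w⟩, fun a b c => ⟨⟨t_mem_fan Q a b c, ?_, ?_⟩,
      ⟨p_mem_fan Q a b c, ?_, ?_⟩⟩⟩
    · -- closedness
      exact (fan_isClosed Q).inter
        (((fan_isClosed Q).preimage
            (cont_op hcr (cont_op hcm continuous_const continuous_id) continuous_const)).inter
          ((fan_isClosed Q).preimage
            (cont_op hcl continuous_const (cont_op hcm continuous_id continuous_const))))
    · -- e, rdiv part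
      show Q.rdiv (x ** Q.e) x ∈ Q.fan
      rw [Q.mul_one, rdiv_self Q]
      exact e_mem_fan Q
    · -- e, ldiv part
      show Q.ldiv x (Q.e ** x) ∈ Q.fan
      rw [Q.one_mul, ldiv_self Q]
      exact e_mem_fan Q
    · -- multiplicativity
      refine ⟨mul_mem_fan Q hn.1 hm.1, ?_, ?_⟩
      · show Q.rdiv (x ** (n ** m)) x ∈ Q.fan
        have hnb : Q.rdiv (x ** n) x ** x = x ** n := Q.rdiv_mul _ x
        have hmb : Q.rdiv (x ** m) x ** x = x ** m := Q.rdiv_mul _ x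
        have key : x ** (n ** m) = (Q.rdiv (x ** n) x ** Q.rdiv (x ** m) x) ** x := by
          calc x ** (n ** m) = (x ** n) ** m := (nM Q (hsub hn.1) x m).symm
            _ = (Q.rdiv (x ** n) x ** x) ** m := by rw [hnb]
            _ = Q.rdiv (x ** n) x ** (x ** m) := nL Q (hsub hn.2.1) x m
            _ = Q.rdiv (x ** n) x ** (Q.rdiv (x ** m) x ** x) := by rw [hmb]
            _ = (Q.rdiv (x ** n) x ** Q.rdiv (x ** m) x) ** x :=
                (nL Q (hsub hn.2.1) _ x).symm
        rw [key, Q.mul_rdiv]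
        exact mul_mem_fan Q hn.2.1 hm.2.1
      · show Q.ldiv x ((n ** m) ** x) ∈ Q.fan
        have hnh : x ** Q.ldiv x (n ** x) = n ** x := Q.mul_ldiv x _
        have hmh : x ** Q.ldiv x (m ** x) = m ** x := Q.mul_ldiv x _
        have key : (n ** m) ** x = x ** (Q.ldiv x (n ** x) ** Q.ldiv x (m ** x)) := by
          calc (n ** m) ** x = n ** (m ** x) := nL Q (hsub hn.1) m x
            _ = n ** (x ** Q.ldiv x (m ** x)) := by rw [hmh]
            _ = (n ** x) ** Q.ldiv x (m ** x) := (nR Q (hsub hm.2.2) n x).symm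
            _ = (x ** Q.ldiv x (n ** x)) ** Q.ldiv x (m ** x) := by rw [hnh]
            _ = x ** (Q.ldiv x (n ** x) ** Q.ldiv x (m ** x)) := nR Q (hsub hm.2.2) x _
        rw [key, Q.ldiv_mul]
        exact mul_mem_fan Q hn.2.2 hm.2.2
    · -- inverses
      have hnN := hsub hn.1
      refine ⟨inv_mem_fan Q hn.1, ?_, ?_⟩
      · show Q.rdiv (x ** Q.ldiv n Q.e) x ∈ Q.fan
        have hnbN : Q.rdiv (x ** n) x ∈ nucleusSet Q.mul := hsub hn.2.1
        have hnb : Q.rdiv (x ** n) x ** x = x ** n := Q.rdiv_mul _ x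
        have h1 : (x ** Q.ldiv n Q.e) ** n = x := by
          rw [nR Q hnN, inv_mul Q hnN, Q.mul_one]
        have h2 : (Q.ldiv (Q.rdiv (x ** n) x) Q.e ** x) ** n = x := by
          calc (Q.ldiv (Q.rdiv (x ** n) x) Q.e ** x) ** n
              = Q.ldiv (Q.rdiv (x ** n) x) Q.e ** (x ** n) :=
                nL Q (inv_mem_nucleus Q hnbN) x n
            _ = Q.ldiv (Q.rdiv (x ** n) x) Q.e ** (Q.rdiv (x ** n) x ** x) := by rw [hnb]
            _ = x := inv_mul_cancel_left Q hnbN x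
        have heq : x ** Q.ldiv n Q.e = Q.ldiv (Q.rdiv (x ** n) x) Q.e ** x :=
          mul_right_cancel Q (h1.trans h2.symm)
        rw [heq, Q.mul_rdiv]
        exact inv_mem_fan Q hn.2.1
      · show Q.ldiv x (Q.ldiv n Q.e ** x) ∈ Q.fan
        have hnhN : Q.ldiv x (n ** x) ∈ nucleusSet Q.mul := hsub hn.2.2
        have hnh : x ** Q.ldiv x (n ** x) = n ** x := Q.mul_ldiv x _
        have h1 : n ** (Q.ldiv n Q.e ** x) = x := mul_inv_cancel_left Q hnN x
        have h2 : n ** (x ** Q.ldiv (Q.ldiv x (n ** x)) Q.e) = x := by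
          calc n ** (x ** Q.ldiv (Q.ldiv x (n ** x)) Q.e)
              = (n ** x) ** Q.ldiv (Q.ldiv x (n ** x)) Q.e :=
                (nR Q (inv_mem_nucleus Q hnhN) n x).symm
            _ = (x ** Q.ldiv x (n ** x)) ** Q.ldiv (Q.ldiv x (n ** x)) Q.e := by rw [hnh]
            _ = x := mul_inv_cancel_right Q hnhN x
        have heq : Q.ldiv n Q.e ** x = x ** Q.ldiv (Q.ldiv x (n ** x)) Q.e :=
          mul_left_cancel Q (h1.trans h2.symm)
        rw [heq, Q.ldiv_mul]
        exact inv_mem_fan Q hn.2.2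
    · -- t, rdiv part
      obtain ⟨T, hTf, -, hT⟩ := t_conj_right Q x a b c
      show Q.rdiv (x ** Q.t a b c) x ∈ Q.fan
      rw [hT, Q.mul_rdiv]
      exact hTf
    · -- t, ldiv part
      obtain ⟨P, hPf, -, hP⟩ := t_conj_left Q a b c x
      show Q.ldiv x (Q.t a b c ** x) ∈ Q.fan
      rw [hP, Q.ldiv_mul]
      exact hPf
    · -- p, rdiv part
      obtain ⟨T, hTf, -, hT⟩ := p_conj_right Q a b c x
      show Q.rdiv (x ** Q.p a b c) x ∈ Q.fan
      rw [hT, Q.mul_rdiv]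
      exact hTf
    · -- p, ldiv part
      obtain ⟨P, hPf, -, hP⟩ := p_conj_left Q a b c x
      show Q.ldiv x (Q.p a b c ** x) ∈ Q.fan
      rw [hP, Q.ldiv_mul]
      exact hPf
  intro n hn
  have h := Set.sInter_subset_of_mem hSmem hn
  exact ⟨h.2.1, h.2.2⟩

end Main

end FanAux
/-- in a T1 topological fan quasigroup the fan `N₀ = N₀(G)` is a
closed normal subgroup: it is closed, a subgroup, and satisfies `xN₀ = N₀x`,
`(xy)N₀ = x(yN₀)`, `(xN₀)y = x(N₀y)` and `N₀(xy) = (N₀x)y` for all `x, y ∈ G`. -/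
theorem stmt_5 {G : Type*} [TopologicalSpace G] [T1Space G]
    (Q : FanQuasigroup G)
    (hcm : Continuous fun q : G × G => Q.mul q.1 q.2)
    (hcl : Continuous fun q : G × G => Q.ldiv q.1 q.2)
    (hcr : Continuous fun q : G × G => Q.rdiv q.1 q.2) :
    IsClosed Q.fan ∧ Q.IsSubgrp Q.fan ∧ Q.IsNormalSub Q.fan := by
  have hsub : Q.fan ⊆ nucleusSet Q.mul := FanAux.fan_subset_nucleus Q hcm hcl
  refine ⟨FanAux.fan_isClosed Q, FanAux.fan_isSubgrp Q hsub, fun x y => ⟨?_, ?_, ?_, ?_⟩⟩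
  · apply Set.Subset.antisymm
    · rintro z ⟨h, hh, rfl⟩
      exact ⟨Q.rdiv (Q.mul x h) x, (FanAux.conj_mem Q hcm hcl hcr x h hh).1,
        Q.rdiv_mul (Q.mul x h) x⟩
    · rintro z ⟨h, hh, rfl⟩
      exact ⟨Q.ldiv x (Q.mul h x), (FanAux.conj_mem Q hcm hcl hcr x h hh).2,
        Q.mul_ldiv x (Q.mul h x)⟩
  · exact Set.image_congr fun h hh => (hsub hh).2 x y
  · exact Set.image_congr fun h hh => (hsub hh).1.2 x y
  · exact Set.image_congr fun h hh => ((hsub hh).1.1 x y).symm
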